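/- arXiv:2011.01924 — 3 statements merged into one kernel-verified Lean document; each statement's English description precedes it below -/
import Mathlib

section
/- Let A ∈ ℝ^{n×n} and B ∈ ℝ^{n×m} with (A,B) controllable, and let ν be the controllability index (the smallest positive integer with [B, AB, …, A^{ν−1}B] full row rank). Then there exists a gain L ∈ ℝ^{m×n} such that (A − BL)^ν = 0. -/
open Matrix

namespace Stmt4Aux

variable {n m : ℕ} (A : Matrix (Fin n) (Fin n) ℝ) (B : Matrix (Fin n) (Fin m) ℝ)

/-- The "deadbeat controllable in `k` steps" subspaces:
`W 0 = ⊥`, `W (k+1) = A⁻¹(W k + range B)`. -/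
def W : ℕ → Submodule ℝ (Fin n → ℝ)
  | 0 => ⊥
  | (k+1) => (W k ⊔ LinearMap.range B.mulVecLin).comap A.mulVecLin

/-- The reachability subspaces `V k = range B + range (A B) + ⋯ + range (A^(k-1) B)`. -/
def V : ℕ → Submodule ℝ (Fin n → ℝ)
  | 0 => ⊥
  | (k+1) => LinearMap.range ((A ^ k * B).mulVecLin) ⊔ V k

lemma W_mono : ∀ k, W A B k ≤ W A B (k+1)
  | 0 => bot_le
  | (k+1) => Submodule.comap_mono (sup_le_sup_right (W_mono k) _)

lemma W_le_of_le {j k : ℕ} (h : j ≤ k) : W A B j ≤ W A B k := by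
  induction h with
  | refl => exact le_refl _
  | step _ ih => exact ih.trans (W_mono A B _)

lemma V_le : ∀ {k j : ℕ}, j < k → LinearMap.range ((A ^ j * B).mulVecLin) ≤ V A B k := by
  intro k
  induction k with
  | zero => omega
  | succ k ih =>
    intro j hj
    rcases Nat.lt_succ_iff_lt_or_eq.mp hj with h | h
    · exact (ih h).trans le_sup_right
    · subst h; exact le_sup_left

/-- Key lemma: if `A^k x ∈ V k` then `x ∈ W k`. -/
lemma key : ∀ (k : ℕ) (x : Fin n → ℝ), (A ^ k).mulVec x ∈ V A B k → x ∈ W A B k := by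
  intro k
  induction k with
  | zero =>
    intro x hx
    simp only [pow_zero, Matrix.one_mulVec, V] at hx
    simpa [W] using hx
  | succ k ih =>
    intro x hx
    simp only [V] at hx
    rcases Submodule.mem_sup.mp hx with ⟨y, hy, z, hz, hyz⟩
    rcases hy with ⟨u, rfl⟩
    rw [Matrix.mulVecLin_apply] at hyz
    have hkey : (A ^ k).mulVec (A.mulVec x - B.mulVec u) = z := by
      rw [Matrix.mulVec_sub, Matrix.mulVec_mulVec, ← pow_succ, Matrix.mulVec_mulVec, ← hyz]
      abel
    have hW : A.mulVec x - B.mulVec u ∈ W A B k := by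
      apply ih
      rw [hkey]; exact hz
    show x ∈ (W A B k ⊔ LinearMap.range B.mulVecLin).comap A.mulVecLin
    rw [Submodule.mem_comap, Matrix.mulVecLin_apply]
    have : A.mulVec x = (A.mulVec x - B.mulVec u) + B.mulVec u := by abel
    rw [this]
    exact Submodule.add_mem _ (Submodule.mem_sup_left hW)
      (Submodule.mem_sup_right ⟨u, rfl⟩)

/-- Existence of a feedback map `ℓ` pushing each `W (j+1)` into `W j`. -/
lemma exists_gain : ∀ N : ℕ, ∃ ℓ : (Fin n → ℝ) →ₗ[ℝ] (Fin m → ℝ),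
    ∀ j < N, ∀ x ∈ W A B (j+1), A.mulVec x - B.mulVec (ℓ x) ∈ W A B j := by
  intro N
  induction N with
  | zero => exact ⟨0, by omega⟩
  | succ N ihN =>
    obtain ⟨ℓ, hℓ⟩ := ihN
    -- residual map
    set g : (Fin n → ℝ) →ₗ[ℝ] (Fin n → ℝ) :=
      A.mulVecLin - B.mulVecLin ∘ₗ ℓ with hg
    have hgapp : ∀ x, g x = A.mulVec x - B.mulVec (ℓ x) := by
      intro x
      simp [hg, LinearMap.sub_apply, LinearMap.comp_apply, Matrix.mulVecLin_apply]
    -- projection onto W (N+1)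
    obtain ⟨C, hC⟩ := Submodule.exists_isCompl (W A B (N+1))
    set P : (Fin n → ℝ) →ₗ[ℝ] (Fin n → ℝ) :=
      (W A B (N+1)).subtype ∘ₗ (W A B (N+1)).projectionOnto C hC with hP
    have hPmem : ∀ x, P x ∈ W A B (N+1) := fun x =>
      ((W A B (N+1)).projectionOnto C hC x).2
    have hPid : ∀ x ∈ W A B (N+1), P x = x := by
      intro x hx
      show (W A B (N+1)).subtype ((W A B (N+1)).projectionOnto C hC x) = x
      rw [show x = ((⟨x, hx⟩ : W A B (N+1)) : Fin n → ℝ) from rfl,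
        Submodule.projectionOnto_apply_left hC]
      rfl
    -- quotient by W N
    set π := (W A B N).mkQ with hπ
    set βb := π ∘ₗ B.mulVecLin with hβb
    have hπB : ∀ u : Fin m → ℝ, π (B.mulVec u) = βb u := by
      intro u; simp [hβb, Matrix.mulVecLin_apply]
    -- g maps W (N+1) into (W N ⊔ range B) hence π ∘ g lands in range βb there
    have hgmem : ∀ x ∈ W A B (N+1), π (g x) ∈ LinearMap.range βb := by
      intro x hx
      have hAx : A.mulVec x ∈ W A B N ⊔ LinearMap.range B.mulVecLin := by
        have := hx
        rw [show W A B (N+1) = (W A B N ⊔ LinearMap.range B.mulVecLin).comap A.mulVecLin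
          from rfl, Submodule.mem_comap, Matrix.mulVecLin_apply] at this
        exact this
      rcases Submodule.mem_sup.mp hAx with ⟨w, hw, b, hb, hwb⟩
      rcases hb with ⟨u, rfl⟩
      rw [Matrix.mulVecLin_apply] at hwb
      have : π (g x) = βb u - βb (ℓ x) := by
        rw [hgapp, map_sub, ← hwb, map_add, ← hπB, ← hπB]
        have hw0 : π w = 0 := by
          rw [hπ, Submodule.mkQ_apply]
          exact (Submodule.Quotient.mk_eq_zero _).mpr hw
        rw [hw0, zero_add]
      rw [this]
      exact Submodule.sub_mem _ ⟨u, rfl⟩ ⟨ℓ x, rfl⟩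
    have hmem : ∀ x, (π ∘ₗ g ∘ₗ P) x ∈ LinearMap.range βb := by
      intro x
      exact hgmem (P x) (hPmem x)
    -- right inverse of βb onto its range
    obtain ⟨τ, hτ⟩ := LinearMap.exists_rightInverse_of_surjective
      βb.rangeRestrict (LinearMap.range_rangeRestrict βb)
    have hβτ : ∀ z : LinearMap.range βb, βb (τ z) = (z : (Fin n → ℝ) ⧸ W A B N) := by
      intro z
      have := LinearMap.congr_fun hτ z
      rw [LinearMap.comp_apply, LinearMap.id_apply] at this
      calc βb (τ z) = (βb.rangeRestrict (τ z) : (Fin n → ℝ) ⧸ W A B N) := rfl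
        _ = (z : (Fin n → ℝ) ⧸ W A B N) := by rw [this]
    set c : (Fin n → ℝ) →ₗ[ℝ] LinearMap.range βb :=
      LinearMap.codRestrict (LinearMap.range βb) (π ∘ₗ g ∘ₗ P) hmem with hc
    have hcval : ∀ x, (c x : (Fin n → ℝ) ⧸ W A B N) = π (g (P x)) := by
      intro x; rfl
    set δ : (Fin n → ℝ) →ₗ[ℝ] (Fin m → ℝ) := τ ∘ₗ c with hδ
    refine ⟨ℓ + δ, ?_⟩
    intro j hj x hx
    have hxW : x ∈ W A B (N+1) := W_le_of_le A B (by omega) hx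
    have hPx : P x = x := hPid x hxW
    have hcx : (c x : (Fin n → ℝ) ⧸ W A B N) = π (g x) := by rw [hcval, hPx]
    have hsplit : A.mulVec x - B.mulVec ((ℓ + δ) x) = g x - B.mulVec (δ x) := by
      rw [hgapp]
      have : (ℓ + δ) x = ℓ x + δ x := rfl
      rw [this, Matrix.mulVec_add]
      abel
    rcases Nat.lt_succ_iff_lt_or_eq.mp hj with hjN | hjN
    · -- j < N : the correction vanishes
      have hgx : g x ∈ W A B j := by
        rw [hgapp]; exact hℓ j hjN x hx
      have hgx0 : π (g x) = 0 := by
        rw [hπ, Submodule.mkQ_apply]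
        exact (Submodule.Quotient.mk_eq_zero _).mpr (W_le_of_le A B (by omega) hgx)
      have hc0 : c x = 0 := by
        apply Subtype.ext
        rw [hcx, hgx0]; rfl
      have hδ0 : δ x = 0 := by
        rw [hδ, LinearMap.comp_apply, hc0, map_zero]
      rw [hsplit, hδ0, Matrix.mulVec_zero, sub_zero]
      exact hgx
    · -- j = N : the correction pushes into W N
      subst hjN
      rw [hsplit]
      have : π (g x - B.mulVec (δ x)) = 0 := by
        have h1 : π (B.mulVec (δ x)) = π (g x) := by
          calc π (B.mulVec (δ x)) = βb (δ x) := hπB _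
            _ = ↑(c x) := by
                rw [hδ, LinearMap.comp_apply]; exact hβτ (c x)
            _ = π (g x) := hcx
        rw [map_sub, h1, sub_self]
      rw [hπ, Submodule.mkQ_apply] at this
      exact (Submodule.Quotient.mk_eq_zero _).mp this

end Stmt4Aux

open Stmt4Aux in
/-- deadbeat control: a controllable pair `(A,B)` with
controllability index `ν` admits a gain `L` with `(A − B L)^ν = 0`. -/
theorem stmt4 {n m : ℕ}
    (A : Matrix (Fin n) (Fin n) ℝ) (B : Matrix (Fin n) (Fin m) ℝ)
    (hcont : (Matrix.of fun (i : Fin n) (p : Fin n × Fin m) =>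
      ((A ^ (p.1 : ℕ)) * B) i p.2).rank = n)
    (ν : ℕ) (hν : 0 < ν)
    (hfull : (Matrix.of fun (i : Fin n) (p : Fin ν × Fin m) =>
      ((A ^ (p.1 : ℕ)) * B) i p.2).rank = n)
    (hmin : ∀ k : ℕ, 0 < k → k < ν →
      (Matrix.of fun (i : Fin n) (p : Fin k × Fin m) =>
        ((A ^ (p.1 : ℕ)) * B) i p.2).rank ≠ n) :
    ∃ L : Matrix (Fin m) (Fin n) ℝ, (A - B * L) ^ ν = 0 := by
  classical
  set M : Matrix (Fin n) (Fin ν × Fin m) ℝ :=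
    Matrix.of fun (i : Fin n) (p : Fin ν × Fin m) => ((A ^ (p.1 : ℕ)) * B) i p.2 with hM
  -- the range of M is ⊤
  have hrange : LinearMap.range M.mulVecLin = ⊤ := by
    apply Submodule.eq_top_of_finrank_eq
    have : M.rank = Module.finrank ℝ (LinearMap.range M.mulVecLin) := rfl
    rw [← this, hfull, Module.finrank_fin_fun]
  -- V ν = ⊤
  have hVtop : V A B ν = ⊤ := by
    rw [eq_top_iff, ← hrange]
    rintro y ⟨u, rfl⟩
    have hdecomp : M.mulVecLin u =
        ∑ j : Fin ν, (A ^ (j : ℕ) * B).mulVec (fun i => u (j, i)) := by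
      funext i
      rw [Matrix.mulVecLin_apply]
      simp only [Matrix.mulVec, dotProduct, Finset.sum_apply]
      rw [Fintype.sum_prod_type]
      rfl
    rw [hdecomp]
    apply Submodule.sum_mem
    intro j _
    exact V_le A B j.2 ⟨_, rfl⟩
  -- W ν = ⊤
  have hWtop : W A B ν = ⊤ := by
    rw [eq_top_iff]
    intro x _
    exact key A B ν x (hVtop ▸ Submodule.mem_top)
  -- the feedback
  obtain ⟨ℓ, hℓ⟩ := exists_gain A B ν
  set F : (Fin n → ℝ) →ₗ[ℝ] (Fin n → ℝ) := A.mulVecLin - B.mulVecLin ∘ₗ ℓ with hF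
  have hFapp : ∀ x, F x = A.mulVec x - B.mulVec (ℓ x) := by
    intro x
    simp [hF, LinearMap.sub_apply, LinearMap.comp_apply, Matrix.mulVecLin_apply]
  -- nilpotency of F on the filtration
  have hnil : ∀ k : ℕ, k ≤ ν → ∀ x ∈ W A B k, (F ^ k) x = 0 := by
    intro k
    induction k with
    | zero =>
      intro _ x hx
      have : x = 0 := by simpa [W] using hx
      simp [this]
    | succ k ih =>
      intro hk x hx
      have hFx : F x ∈ W A B k := by
        rw [hFapp]
        exact hℓ k (by omega) x hx
      have : (F ^ (k+1)) x = (F ^ k) (F x) := by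
        rw [pow_succ, Module.End.mul_apply]
      rw [this]
      exact ih (by omega) (F x) hFx
  -- the gain matrix
  refine ⟨LinearMap.toMatrix' ℓ, ?_⟩
  set L : Matrix (Fin m) (Fin n) ℝ := LinearMap.toMatrix' ℓ with hL
  have hABL : (A - B * L).mulVecLin = F := by
    have h1 : L.mulVecLin = ℓ := by
      rw [hL, ← Matrix.toLin'_apply']
      exact Matrix.toLin'_toMatrix' ℓ
    have h2 : (B * L).mulVecLin = B.mulVecLin ∘ₗ ℓ := by
      rw [Matrix.mulVecLin_mul, h1]
    apply LinearMap.ext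
    intro x
    rw [hF, Matrix.mulVecLin_apply, Matrix.sub_mulVec, LinearMap.sub_apply,
      Matrix.mulVecLin_apply]
    have := LinearMap.congr_fun h2 x
    rw [Matrix.mulVecLin_apply] at this
    rw [this]
  have hequiv : ∀ X : Matrix (Fin n) (Fin n) ℝ, Matrix.toLinAlgEquiv' X = X.mulVecLin := by
    intro X
    apply LinearMap.ext
    intro v
    rw [Matrix.toLinAlgEquiv'_apply, Matrix.mulVecLin_apply]
  apply Matrix.toLinAlgEquiv'.injective
  rw [map_pow, map_zero, hequiv, hABL]
  apply LinearMap.ext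
  intro x
  rw [LinearMap.zero_apply]
  exact hnil ν (le_refl ν) x (hWtop ▸ Submodule.mem_top)
end

section
/- Let {a_k} be a nonnegative real sequence satisfying a_{k+1} ≤ ρ(a_k) + b_k where ρ : [0,∞) → [0,∞) is continuous with ρ(s) < s for all s > 0, ρ(0) = 0, and b_k → 0. If additionally a_k is bounded, then a_k → 0. -/
open Filter

/-- comparison lemma for ISS: `a_{k+1} ≤ ρ(a_k) + b_k` with
contraction `ρ` and vanishing `b_k` forces the bounded sequence `a_k → 0`. -/
theorem stmt11 (a b : ℕ → ℝ) (ρ : ℝ → ℝ)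
    (ha_nonneg : ∀ k, 0 ≤ a k)
    (hρ_cont : ContinuousOn ρ (Set.Ici 0))
    (hρ_nonneg : ∀ s, 0 ≤ s → 0 ≤ ρ s)
    (hρ_contr : ∀ s, 0 < s → ρ s < s)
    (hρ0 : ρ 0 = 0)
    (hrec : ∀ k, a (k + 1) ≤ ρ (a k) + b k)
    (hb : Tendsto b atTop (nhds 0))
    (M : ℝ) (hbdd : ∀ k, a k ≤ M) :
    Tendsto a atTop (nhds 0) := by
  -- ρ s ≤ s for all s ≥ 0
  have hρ_le : ∀ s, 0 ≤ s → ρ s ≤ s := by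
    intro s hs
    rcases eq_or_lt_of_le hs with h | h
    · simp [← h, hρ0]
    · exact (hρ_contr s h).le
  rw [Metric.tendsto_atTop]
  intro ε hε
  set ε' := ε / 2 with hε'def
  have hε' : 0 < ε' := by positivity
  have hε'lt : ε' < ε := by simpa [hε'def] using half_lt_self hε
  by_cases hMε : M < ε'
  · exact ⟨0, fun k _ => by
      rw [Real.dist_eq, sub_zero, abs_of_nonneg (ha_nonneg k)]
      exact lt_trans (lt_of_le_of_lt (hbdd k) hMε) hε'lt⟩
  push_neg at hMε
  -- compact minimum of s - ρ s on [ε', M]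
  have hcomp : IsCompact (Set.Icc ε' M) := isCompact_Icc
  have hne : (Set.Icc ε' M).Nonempty := Set.nonempty_Icc.mpr hMε
  have hsub : Set.Icc ε' M ⊆ Set.Ici 0 := fun s hs => le_trans hε'.le hs.1
  have hfc : ContinuousOn (fun s => s - ρ s) (Set.Icc ε' M) :=
    (continuousOn_id.sub (hρ_cont.mono hsub))
  obtain ⟨s₀, hs₀mem, hs₀min⟩ := hcomp.exists_isMinOn hne hfc
  set δ := s₀ - ρ s₀ with hδdef
  have hδ : 0 < δ := sub_pos.mpr (hρ_contr s₀ (lt_of_lt_of_le hε' hs₀mem.1))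
  have hδmin : ∀ s ∈ Set.Icc ε' M, δ ≤ s - ρ s := fun s hs => hs₀min hs
  -- choose N so that b k is small
  have hb' : ∀ᶠ k in atTop, b k < min (δ / 2) ε' := by
    have := (Metric.tendsto_atTop.mp hb) (min (δ / 2) ε') (lt_min (by positivity) hε')
    obtain ⟨N, hN⟩ := this
    refine eventually_atTop.mpr ⟨N, fun k hk => ?_⟩
    have := hN k hk
    rw [Real.dist_eq, sub_zero] at this
    exact lt_of_le_of_lt (le_abs_self _) this
  obtain ⟨N, hN⟩ := eventually_atTop.mp hb'
  -- step while above ε'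
  have step1 : ∀ k, N ≤ k → ε' ≤ a k → a (k + 1) ≤ a k - δ / 2 := by
    intro k hk hak
    have h1 : δ ≤ a k - ρ (a k) := hδmin _ ⟨hak, hbdd k⟩
    have h2 : b k < δ / 2 := lt_of_lt_of_le (hN k hk) (min_le_left _ _)
    have := hrec k
    linarith
  -- step while below ε'
  have step2 : ∀ k, N ≤ k → a k < ε' → a (k + 1) < ε := by
    intro k hk hak
    have h1 : ρ (a k) ≤ a k := hρ_le _ (ha_nonneg k)
    have h2 : b k < ε' := lt_of_lt_of_le (hN k hk) (min_le_right _ _)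
    have := hrec k
    have : a (k + 1) < ε' + ε' := by linarith
    linarith [hε'lt, hε]
  -- find k₀ ≥ N with a k₀ < ε'
  have hdrop : ∃ k₀, N ≤ k₀ ∧ a k₀ < ε' := by
    by_contra hcon
    push_neg at hcon
    have hall : ∀ k, N ≤ k → ε' ≤ a k := fun k hk => hcon k hk
    have hind : ∀ j : ℕ, a (N + j) ≤ a N - j * (δ / 2) := by
      intro j
      induction j with
      | zero => simp
      | succ n ih =>
        have h1 : a (N + n + 1) ≤ a (N + n) - δ / 2 :=
          step1 _ (Nat.le_add_right _ _) (hall _ (Nat.le_add_right _ _))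
        have : (N + (n + 1)) = (N + n) + 1 := by ring
        rw [this]
        push_cast
        linarith
    obtain ⟨j, hj⟩ := exists_nat_gt (M / (δ / 2))
    have hjM : M < j * (δ / 2) := by
      rwa [div_lt_iff₀ (by positivity)] at hj
    have := hind j
    have h0 := ha_nonneg (N + j)
    have hM := hbdd N
    linarith
  obtain ⟨k₀, hk₀N, hk₀⟩ := hdrop
  -- invariant: a k < ε for all k ≥ k₀
  refine ⟨k₀, fun k hk => ?_⟩
  rw [Real.dist_eq, sub_zero, abs_of_nonneg (ha_nonneg k)]
  induction k, hk using Nat.le_induction with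
  | base => exact lt_trans hk₀ hε'lt
  | succ n hn ih =>
    by_cases h : a n < ε'
    · exact step2 n (le_trans hk₀N hn) h
    · push_neg at h
      have := step1 n (le_trans hk₀N hn) h
      linarith
end

section
/- Consider the parametric quadratic program min_v { ½vᵀHv + qᵀv : Gv ≤ w + Sx } with H symmetric positive definite and polyhedral feasible set nonempty for all x in a set 𝒟. Then the solution map x ↦ v*(x) is single-valued, and is Lipschitz continuous on any convex subset of 𝒟 where the feasible set map x ↦ {v : Gv ≤ w + Sx} is nonempty. -/
open Matrix Set

namespace Stmt17Aux

variable {d q r : ℕ}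

/-- quadratic objective -/
noncomputable def qf (H : Matrix (Fin d) (Fin d) ℝ) (qvec : Fin d → ℝ) (v : Fin d → ℝ) : ℝ :=
  (1/2) * (v ⬝ᵥ H *ᵥ v) + qvec ⬝ᵥ v

/-- feasible set -/
def K (G : Matrix (Fin r) (Fin d) ℝ) (w : Fin r → ℝ) (S : Matrix (Fin r) (Fin q) ℝ)
    (x : Fin q → ℝ) : Set (Fin d → ℝ) :=
  {v | ∀ i, (G *ᵥ v) i ≤ w i + (S *ᵥ x) i}

variable {H : Matrix (Fin d) (Fin d) ℝ} {qvec : Fin d → ℝ}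
  {G : Matrix (Fin r) (Fin d) ℝ} {w : Fin r → ℝ} {S : Matrix (Fin r) (Fin q) ℝ}

lemma symm_dot (hHsymm : H.IsSymm) (u v : Fin d → ℝ) :
    u ⬝ᵥ H *ᵥ v = v ⬝ᵥ H *ᵥ u := by
  rw [Matrix.dotProduct_mulVec, ← Matrix.mulVec_transpose, hHsymm.eq, dotProduct_comm]

lemma pd_pos (hHpd : H.PosDef) {v : Fin d → ℝ} (hv : v ≠ 0) : 0 < v ⬝ᵥ H *ᵥ v := by
  simpa using hHpd.dotProduct_mulVec_pos hv

lemma pd_nonneg (hHpd : H.PosDef) (v : Fin d → ℝ) : 0 ≤ v ⬝ᵥ H *ᵥ v := by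
  rcases eq_or_ne v 0 with h | h
  · simp [h]
  · exact (pd_pos hHpd h).le

lemma qf_expand (hHsymm : H.IsSymm) (v e : Fin d → ℝ) :
    qf H qvec (v + e) = qf H qvec v + (H *ᵥ v + qvec) ⬝ᵥ e + (1/2) * (e ⬝ᵥ H *ᵥ e) := by
  simp only [qf, Matrix.mulVec_add, dotProduct_add, add_dotProduct,
    dotProduct_add]
  have h := symm_dot hHsymm e v
  have h2 : (H *ᵥ v) ⬝ᵥ e = v ⬝ᵥ H *ᵥ e := by
    rw [dotProduct_comm, symm_dot hHsymm e v]
  ring_nf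
  nlinarith [h2]

lemma qf_smul_expand (hHsymm : H.IsSymm) (v e : Fin d → ℝ) (t : ℝ) :
    qf H qvec (v + t • e) = qf H qvec v + t * ((H *ᵥ v + qvec) ⬝ᵥ e)
      + (t^2/2) * (e ⬝ᵥ H *ᵥ e) := by
  rw [qf_expand hHsymm v (t • e)]
  simp only [Matrix.mulVec_smul, dotProduct_smul, smul_dotProduct,
    smul_eq_mul]
  ring


lemma quad_cont : Continuous (fun v : Fin d → ℝ => v ⬝ᵥ H *ᵥ v) :=
  continuous_id.dotProduct (continuous_const.matrix_mulVec continuous_id)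

lemma qf_cont : Continuous (qf H qvec) := by
  unfold qf
  exact ((continuous_const.mul quad_cont).add
    (continuous_const.dotProduct continuous_id))

/-- coercivity constant -/
lemma exists_coercive (hHpd : H.PosDef) :
    ∃ m : ℝ, 0 < m ∧ ∀ v : Fin d → ℝ, m * ‖v‖^2 ≤ v ⬝ᵥ H *ᵥ v := by
  rcases isEmpty_or_nonempty (Fin d) with hd | hd
  · refine ⟨1, one_pos, fun v => ?_⟩
    have : v = 0 := Subsingleton.elim _ _
    simp [this]
  · have hS : (Metric.sphere (0 : Fin d → ℝ) 1).Nonempty := by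
      exact NormedSpace.sphere_nonempty.2 zero_le_one
    have hcomp : IsCompact (Metric.sphere (0 : Fin d → ℝ) 1) := isCompact_sphere _ _
    obtain ⟨u₀, hu₀, hmin⟩ := hcomp.exists_isMinOn hS quad_cont.continuousOn
    have hu₀ne : u₀ ≠ 0 := by
      intro h
      have := mem_sphere_zero_iff_norm.1 hu₀
      simp [h] at this
    refine ⟨u₀ ⬝ᵥ H *ᵥ u₀, pd_pos hHpd hu₀ne, fun v => ?_⟩
    rcases eq_or_ne v 0 with h | h
    · simp [h]
    · have hn : ‖v‖ ≠ 0 := norm_ne_zero_iff.2 h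
      have hnpos : (0:ℝ) < ‖v‖ := norm_pos_iff.2 h
      set u : Fin d → ℝ := ‖v‖⁻¹ • v with hu
      have husphere : u ∈ Metric.sphere (0 : Fin d → ℝ) 1 := by
        simp [hu, mem_sphere_zero_iff_norm, norm_smul, abs_of_pos (inv_pos.2 hnpos),
          inv_mul_cancel₀ hn]
      have hle := hmin husphere
      have hveq : v = ‖v‖ • u := by
        simp [hu, smul_smul, mul_inv_cancel₀ hn]
      have hexp : v ⬝ᵥ H *ᵥ v = ‖v‖^2 * (u ⬝ᵥ H *ᵥ u) := by
        conv_lhs => rw [hveq]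
        rw [Matrix.mulVec_smul, dotProduct_smul, smul_dotProduct,
          smul_eq_mul, smul_eq_mul]
        ring
      rw [hexp]
      have h2 : (0:ℝ) ≤ ‖v‖^2 := sq_nonneg _
      calc u₀ ⬝ᵥ H *ᵥ u₀ * ‖v‖^2 ≤ (u ⬝ᵥ H *ᵥ u) * ‖v‖^2 := by
            exact mul_le_mul_of_nonneg_right hle h2
        _ = ‖v‖^2 * (u ⬝ᵥ H *ᵥ u) := by ring

lemma K_convex (x : Fin q → ℝ) : Convex ℝ (K G w S x) := by
  have : K G w S x = ⋂ i, {v : Fin d → ℝ | (G *ᵥ v) i ≤ w i + (S *ᵥ x) i} := by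
    ext v; simp [K]
  rw [this]
  refine convex_iInter fun i => ?_
  have hlin : IsLinearMap ℝ (fun v : Fin d → ℝ => (G *ᵥ v) i) := by
    constructor
    · intro u v; simp [Matrix.mulVec_add]
    · intro c v; simp [Matrix.mulVec_smul]
  exact convex_halfSpace_le hlin _

lemma K_closed (x : Fin q → ℝ) : IsClosed (K G w S x) := by
  have : K G w S x = ⋂ i, {v : Fin d → ℝ | (G *ᵥ v) i ≤ w i + (S *ᵥ x) i} := by
    ext v; simp [K]
  rw [this]
  refine isClosed_iInter fun i => ?_
  have hc : Continuous (fun v : Fin d → ℝ => (G *ᵥ v) i) :=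
    (continuous_apply i).comp (continuous_const.matrix_mulVec continuous_id)
  exact isClosed_le hc continuous_const

/-- existence of a minimizer on any nonempty closed convex set -/
lemma exists_min (hHsymm : H.IsSymm) (hHpd : H.PosDef) {A : Set (Fin d → ℝ)}
    (hA : A.Nonempty) (hAc : IsClosed A) :
    ∃ v ∈ A, ∀ u ∈ A, qf H qvec v ≤ qf H qvec u := by
  obtain ⟨m, hm, hcoer⟩ := exists_coercive hHpd
  obtain ⟨v₀, hv₀⟩ := hA
  set c : ℝ := ∑ i, |qvec i| with hc
  have hqbound : ∀ v : Fin d → ℝ, -(c * ‖v‖) ≤ qvec ⬝ᵥ v := by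
    intro v
    have : |qvec ⬝ᵥ v| ≤ c * ‖v‖ := by
      calc |qvec ⬝ᵥ v| ≤ ∑ i, |qvec i * v i| := Finset.abs_sum_le_sum_abs _ _
        _ ≤ ∑ i, |qvec i| * ‖v‖ := by
            refine Finset.sum_le_sum fun i _ => ?_
            rw [abs_mul]
            exact mul_le_mul_of_nonneg_left (norm_le_pi_norm v i) (abs_nonneg _)
        _ = c * ‖v‖ := by rw [← Finset.sum_mul]
    linarith [neg_abs_le (qvec ⬝ᵥ v)]
  have hlb : ∀ v : Fin d → ℝ, (m/2) * ‖v‖^2 - c * ‖v‖ ≤ qf H qvec v := by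
    intro v
    have h1 := hcoer v
    have h2 := hqbound v
    simp only [qf]
    nlinarith
  -- choose radius
  obtain ⟨R, hR⟩ : ∃ R : ℝ, ‖v₀‖ ≤ R ∧ ∀ s : ℝ, R ≤ s → qf H qvec v₀ < (m/2) * s^2 - c * s := by
    refine ⟨max (max ‖v₀‖ 1) ((2/m) * (c + |qf H qvec v₀| + 1)),
      le_trans (le_max_left _ _) (le_max_left _ _), fun s hs => ?_⟩
    have hs2 : (2/m) * (c + |qf H qvec v₀| + 1) ≤ s := le_trans (le_max_right _ _) hs
    have hs1 : 1 ≤ s := le_trans (le_trans (le_max_right _ _) (le_max_left _ _)) hs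
    have hs0 : 0 ≤ s := le_trans zero_le_one hs1
    have hcn : 0 ≤ c := by positivity
    have key : c + |qf H qvec v₀| + 1 ≤ (m/2) * s := by
      have h4 : (2/m) * (c + |qf H qvec v₀| + 1) * (m/2) ≤ s * (m/2) :=
        mul_le_mul_of_nonneg_right hs2 (by positivity)
      have h5 : (2/m) * (c + |qf H qvec v₀| + 1) * (m/2) = c + |qf H qvec v₀| + 1 := by
        field_simp
      linarith [h4, h5.symm.le]
    have h1 : qf H qvec v₀ ≤ |qf H qvec v₀| := le_abs_self _
    have h6 : (c + |qf H qvec v₀| + 1) * s ≤ (m/2) * s * s :=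
      mul_le_mul_of_nonneg_right key hs0
    nlinarith [abs_nonneg (qf H qvec v₀)]
  set B := A ∩ Metric.closedBall (0 : Fin d → ℝ) R with hB
  have hBne : B.Nonempty := ⟨v₀, hv₀, by simpa [Metric.mem_closedBall] using hR.1⟩
  have hBcomp : IsCompact B :=
    (isCompact_closedBall _ _).inter_left hAc
  obtain ⟨v, hvB, hminB⟩ := hBcomp.exists_isMinOn hBne qf_cont.continuousOn
  refine ⟨v, hvB.1, fun u hu => ?_⟩
  rcases le_or_gt ‖u‖ R with h | h
  · exact hminB ⟨hu, by simpa [Metric.mem_closedBall] using h⟩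
  · have h1 : qf H qvec v ≤ qf H qvec v₀ :=
      hminB ⟨hv₀, by simpa [Metric.mem_closedBall] using hR.1⟩
    have h2 := hR.2 ‖u‖ h.le
    have h3 := hlb u
    linarith

/-- uniqueness of minimizers -/
lemma min_unique (hHsymm : H.IsSymm) (hHpd : H.PosDef) {A : Set (Fin d → ℝ)}
    (hAcv : Convex ℝ A) {v u : Fin d → ℝ} (hv : v ∈ A) (hu : u ∈ A)
    (hvmin : ∀ z ∈ A, qf H qvec v ≤ qf H qvec z)
    (humin : ∀ z ∈ A, qf H qvec u ≤ qf H qvec z) : v = u := by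
  by_contra hne
  have hmid : v + (1/2 : ℝ) • (u - v) ∈ A := by
    have := hAcv hv hu (by norm_num : (0:ℝ) ≤ 1/2) (by norm_num : (0:ℝ) ≤ 1/2) (by norm_num)
    convert this using 1
    simp [smul_sub]
    module
  have hval := hvmin _ hmid
  rw [qf_smul_expand hHsymm v (u - v)] at hval
  have hvu : qf H qvec v = qf H qvec u := le_antisymm (hvmin u hu) (humin v hv)
  have hexp : qf H qvec u = qf H qvec v + ((H *ᵥ v + qvec) ⬝ᵥ (u - v))
      + (1/2) * ((u - v) ⬝ᵥ H *ᵥ (u - v)) := by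
    have := qf_expand (qvec := qvec) hHsymm v (u - v)
    simpa using this
  have hpos : 0 < (u - v) ⬝ᵥ H *ᵥ (u - v) :=
    pd_pos hHpd (sub_ne_zero.2 (Ne.symm hne))
  nlinarith

/-- first-order optimality: directional derivative nonneg toward feasible points -/
lemma varineq (hHsymm : H.IsSymm) (hHpd : H.PosDef) {A : Set (Fin d → ℝ)}
    (hAcv : Convex ℝ A) {v : Fin d → ℝ} (hv : v ∈ A)
    (hvmin : ∀ z ∈ A, qf H qvec v ≤ qf H qvec z) {u : Fin d → ℝ} (hu : u ∈ A) :
    0 ≤ (H *ᵥ v + qvec) ⬝ᵥ (u - v) := by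
  by_contra hneg
  push_neg at hneg
  set g := (H *ᵥ v + qvec) ⬝ᵥ (u - v) with hg
  set Q := (u - v) ⬝ᵥ H *ᵥ (u - v) with hQ
  have hQ0 : 0 ≤ Q := pd_nonneg hHpd _
  -- pick t small
  set t : ℝ := min 1 (-g / (Q + 1)) with ht
  have hQ1 : (0:ℝ) < Q + 1 := by linarith
  have ht0 : 0 < t := lt_min one_pos (div_pos (neg_pos.2 hneg) hQ1)
  have ht1 : t ≤ 1 := min_le_left _ _
  have htg : t ≤ -g / (Q + 1) := min_le_right _ _
  have hmem : v + t • (u - v) ∈ A := by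
    have := hAcv hv hu (by linarith : (0:ℝ) ≤ 1 - t) ht0.le (by ring)
    convert this using 1
    module
  have hval := hvmin _ hmem
  rw [qf_smul_expand hHsymm v (u - v)] at hval
  -- so t*g + t^2/2 * Q ≥ 0, i.e. g + t/2 Q ≥ 0, but t ≤ -g/(Q+1) gives contradiction
  have h1 : 0 ≤ t * g + (t^2/2) * Q := by linarith
  have h2 : 0 ≤ g + (t/2) * Q := by
    have := mul_le_mul_of_nonneg_left h1 (le_of_lt (inv_pos.2 ht0))
    field_simp at this ⊢
    nlinarith
  have h3 : t * (Q + 1) ≤ -g := by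
    rw [← le_div_iff₀ hQ1]; exact htg
  nlinarith


/-- orthogonal decomposition w.r.t. dotProduct -/
lemma exists_orth_decomp (U : Submodule ℝ (Fin d → ℝ)) (z : Fin d → ℝ) :
    ∃ s, s ∈ U ∧ ∀ u ∈ U, u ⬝ᵥ (z - s) = 0 := by
  let L := WithLp.linearEquiv 2 ℝ (Fin d → ℝ)
  let U' : Submodule ℝ (EuclideanSpace ℝ (Fin d)) := U.comap L.toLinearMap
  let z' : EuclideanSpace ℝ (Fin d) := L.symm z
  let s' : EuclideanSpace ℝ (Fin d) := (U'.orthogonalProjectionOnto z' : EuclideanSpace ℝ (Fin d))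
  have hs'U : s' ∈ U' := (U'.orthogonalProjectionOnto z').2
  refine ⟨L s', by simpa [U'] using hs'U, ?_⟩
  intro u hu
  have hu' : L.symm u ∈ U' := by simpa [U'] using hu
  have h : inner ℝ (z' - s') (L.symm u) = 0 := U'.starProjection_inner_eq_zero z' (L.symm u) hu'
  rw [real_inner_comm] at h
  rw [PiLp.inner_apply] at h
  simpa [dotProduct, RCLike.inner_apply, L, mul_comm, z'] using h

variable (G) in
/-- span of active rows -/
def UU (A : Finset (Fin r)) : Submodule ℝ (Fin d → ℝ) :=
  Submodule.span ℝ (Set.range (fun i : A => G i))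

lemma row_mem_UU {A : Finset (Fin r)} {i : Fin r} (hi : i ∈ A) : G i ∈ UU G A :=
  Submodule.subset_span ⟨⟨i, hi⟩, rfl⟩

lemma dot_row (v : Fin d → ℝ) (i : Fin r) : G i ⬝ᵥ v = (G *ᵥ v) i := rfl

lemma dot_self_pos {t : Fin d → ℝ} (h0 : t ≠ 0) : 0 < t ⬝ᵥ t := by
  have hne : ∃ i, t i ≠ 0 := by
    by_contra hc; push_neg at hc; exact h0 (funext hc)
  obtain ⟨i0, hi0⟩ := hne
  have : (0:ℝ) < ∑ i, t i * t i :=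
    Finset.sum_pos' (fun i _ => mul_self_nonneg _) ⟨i0, Finset.mem_univ _, mul_self_pos.2 hi0⟩
  simpa [dotProduct] using this

/-- span-form KKT conditions at a minimizer (no sign information needed) -/
lemma span_kkt (hHsymm : H.IsSymm) (hHpd : H.PosDef) {x : Fin q → ℝ} {v : Fin d → ℝ}
    (hvK : v ∈ K G w S x) (hmin : ∀ u ∈ K G w S x, qf H qvec v ≤ qf H qvec u)
    (A : Finset (Fin r)) (hA : ∀ i, i ∈ A ↔ (G *ᵥ v) i = w i + (S *ᵥ x) i) :
    H *ᵥ v + qvec ∈ UU G A := by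
  classical
  obtain ⟨s, hsU, hort⟩ := exists_orth_decomp (UU G A) (-(H *ᵥ v + qvec))
  set t : Fin d → ℝ := -(H *ᵥ v + qvec) - s with htdef
  have hts : ∀ u ∈ UU G A, u ⬝ᵥ t = 0 := hort
  -- feasibility of v + ε • t for small positive ε
  set I : Finset (Fin r) := Finset.univ.filter (fun i => i ∉ A) with hI
  have hfeas_eps : ∃ ε₀ : ℝ, 0 < ε₀ ∧ ∀ ε : ℝ, 0 < ε → ε ≤ ε₀ → v + ε • t ∈ K G w S x := by
    rcases I.eq_empty_or_nonempty with hIe | hIne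
    · refine ⟨1, one_pos, fun ε he h1 => ?_⟩
      intro i
      have hiA : i ∈ A := by
        by_contra hiA
        have : i ∈ I := by simp [hI, hiA]
        simp [hIe] at this
      have hGt : (G *ᵥ t) i = 0 := by
        rw [← dot_row]; exact hts _ (row_mem_UU hiA)
      rw [Matrix.mulVec_add, Matrix.mulVec_smul]
      simp [hGt, (hA i).1 hiA]
    · refine ⟨I.inf' hIne (fun i => (w i + (S *ᵥ x) i - (G *ᵥ v) i) / (1 + |(G *ᵥ t) i|)),
        ?_, ?_⟩
      · rw [Finset.lt_inf'_iff]
        intro i hiI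
        have hiA : i ∉ A := by simp [hI] at hiI; exact hiI
        have hlt : (G *ᵥ v) i < w i + (S *ᵥ x) i :=
          lt_of_le_of_ne (hvK i) (fun hh => hiA ((hA i).2 hh))
        have h1 : (0:ℝ) < w i + (S *ᵥ x) i - (G *ᵥ v) i := by linarith
        positivity
      · intro ε he hle i
        rw [Matrix.mulVec_add, Matrix.mulVec_smul]
        by_cases hiA : i ∈ A
        · have hGt : (G *ᵥ t) i = 0 := by
            rw [← dot_row]; exact hts _ (row_mem_UU hiA)
          simp [hGt, (hA i).1 hiA]
        · have hiI : i ∈ I := by simp [hI, hiA]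
          have hle2 : ε ≤ (w i + (S *ᵥ x) i - (G *ᵥ v) i) / (1 + |(G *ᵥ t) i|) :=
            le_trans hle (Finset.inf'_le _ hiI)
          have habs : (0:ℝ) < 1 + |(G *ᵥ t) i| := by positivity
          have h3 : ε * (1 + |(G *ᵥ t) i|) ≤ w i + (S *ᵥ x) i - (G *ᵥ v) i := by
            rw [← le_div_iff₀ habs]; exact hle2
          have h4 : ε * (G *ᵥ t) i ≤ ε * (1 + |(G *ᵥ t) i|) := by
            have := le_abs_self ((G *ᵥ t) i)
            nlinarith
          have : (v + ε • t) = v + ε • t := rfl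
          simp only [Pi.add_apply, Pi.smul_apply, smul_eq_mul]
          linarith
  -- optimality forces t = 0
  have htt : t ⬝ᵥ t = 0 := by
    obtain ⟨ε₀, hε₀, hfe⟩ := hfeas_eps
    by_contra htt0
    have httpos : 0 < t ⬝ᵥ t := by
      rcases eq_or_ne t 0 with h0 | h0
      · exact absurd (by simp [h0]) htt0
      · exact dot_self_pos h0
    set Q := t ⬝ᵥ H *ᵥ t with hQ
    have hQ0 : 0 ≤ Q := pd_nonneg hHpd _
    set ε : ℝ := min ε₀ ((t ⬝ᵥ t) / (Q + 1)) with hε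
    have hεpos : 0 < ε := lt_min hε₀ (div_pos httpos (by linarith))
    have hεle : ε ≤ ε₀ := min_le_left _ _
    have hmem := hfe ε hεpos hεle
    have hval := hmin _ hmem
    rw [qf_smul_expand hHsymm v t] at hval
    have hgd : (H *ᵥ v + qvec) ⬝ᵥ t = -(t ⬝ᵥ t) := by
      have h1 : s ⬝ᵥ t = 0 := hts s hsU
      have h2 : (-(H *ᵥ v + qvec)) ⬝ᵥ t = s ⬝ᵥ t + t ⬝ᵥ t := by
        have : (-(H *ᵥ v + qvec)) = s + t := by simp [htdef]
        rw [this, add_dotProduct]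
      have h3 : (-(H *ᵥ v + qvec)) ⬝ᵥ t = -((H *ᵥ v + qvec) ⬝ᵥ t) := by
        simp [neg_dotProduct]
      linarith
    rw [hgd] at hval
    have h5 : ε * (Q + 1) ≤ t ⬝ᵥ t := by
      rw [← le_div_iff₀ (by linarith : (0:ℝ) < Q + 1)]
      exact min_le_right _ _
    nlinarith
  have ht0 : t = 0 := by
    by_contra h0
    exact absurd htt (ne_of_gt (dot_self_pos h0))
  have hveq : H *ᵥ v + qvec = -s := by
    have h1 : -(H *ᵥ v + qvec) - s = 0 := ht0
    have h2 : -(H *ᵥ v + qvec) = s := sub_eq_zero.1 h1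
    rw [← h2]; ring
  rw [hveq]
  exact (UU G A).neg_mem hsU


/-- the solution with given active set is an affine function of the parameter -/
lemma exists_affine_family (hHpd : H.PosDef) :
    ∃ aff : Finset (Fin r) → (Fin q → ℝ) → (Fin d → ℝ),
      (∀ A, ∃ (ℓ : (Fin q → ℝ) →ₗ[ℝ] (Fin d → ℝ)) (b : Fin d → ℝ),
        ∀ x, aff A x = ℓ x + b) ∧
      (∀ A (x : Fin q → ℝ) (v : Fin d → ℝ),
        (∀ i ∈ A, (G *ᵥ v) i = w i + (S *ᵥ x) i) → (H *ᵥ v + qvec ∈ UU G A) →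
        v = aff A x) := by
  classical
  -- for each active set A build the linear system map and a left inverse
  have main : ∀ A : Finset (Fin r),
      ∃ (ℓ : (Fin q → ℝ) →ₗ[ℝ] (Fin d → ℝ)) (b : Fin d → ℝ),
        ∀ (x : Fin q → ℝ) (v : Fin d → ℝ),
          (∀ i ∈ A, (G *ᵥ v) i = w i + (S *ᵥ x) i) → (H *ᵥ v + qvec ∈ UU G A) →
          v = ℓ x + b := by
    intro A
    set Uq := (Fin d → ℝ) ⧸ UU G A with hUq
    -- the "active rows" linear map
    let L1 : (Fin d → ℝ) →ₗ[ℝ] (Fin r → ℝ) :=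
      { toFun := fun v i => if i ∈ A then (G *ᵥ v) i else 0
        map_add' := by
          intro u v; funext i
          by_cases hi : i ∈ A <;> simp [hi, Matrix.mulVec_add]
        map_smul' := by
          intro c v; funext i
          by_cases hi : i ∈ A <;> simp [hi, Matrix.mulVec_smul] }
    let L2 : (Fin d → ℝ) →ₗ[ℝ] Uq := (UU G A).mkQ.comp (Matrix.mulVecLin H)
    let Θ : (Fin d → ℝ) →ₗ[ℝ] (Fin r → ℝ) × Uq := L1.prod L2
    have hinj : LinearMap.ker Θ = ⊥ := by
      rw [LinearMap.ker_eq_bot']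
      intro v hv
      have h1 : L1 v = 0 := congrArg Prod.fst hv
      have h2 : L2 v = 0 := congrArg Prod.snd hv
      have h3 : H *ᵥ v ∈ UU G A := by
        have := h2
        simp only [L2, LinearMap.comp_apply, Submodule.mkQ_apply, Matrix.mulVecLin_apply] at this
        exact (Submodule.Quotient.mk_eq_zero _).1 this
      -- express H *ᵥ v as combination of active rows
      have h4 : ∃ c : A → ℝ, ∑ i : A, c i • G (i : Fin r) = H *ᵥ v :=
        (Submodule.mem_span_range_iff_exists_fun ℝ).1 h3
      obtain ⟨c, hc⟩ := h4
      have h5 : v ⬝ᵥ H *ᵥ v = 0 := by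
        rw [← hc]
        have hlin : v ⬝ᵥ (∑ i : A, c i • G (i : Fin r))
            = ∑ i : A, c i * (v ⬝ᵥ G (i : Fin r)) := by
          simp only [dotProduct, Finset.sum_apply, Pi.smul_apply, smul_eq_mul,
            Finset.mul_sum]
          rw [Finset.sum_comm]
          exact Finset.sum_congr rfl fun i _ => Finset.sum_congr rfl fun j _ => by ring
        rw [hlin]
        refine Finset.sum_eq_zero fun i _ => ?_
        have hGi : (G *ᵥ v) (i : Fin r) = 0 := by
          have := congrFun h1 (i : Fin r)
          simpa [L1, i.2] using this
        have : v ⬝ᵥ G (i : Fin r) = 0 := by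
          rw [dotProduct_comm, dot_row, hGi]
        rw [this]; simp
      by_contra hvne
      exact absurd h5 (ne_of_gt (pd_pos hHpd hvne))
    obtain ⟨θ, hθ⟩ := Θ.exists_leftInverse_of_injective hinj
    -- affine pieces of the right-hand side
    let RHS1 : (Fin q → ℝ) →ₗ[ℝ] (Fin r → ℝ) :=
      { toFun := fun x i => if i ∈ A then (S *ᵥ x) i else 0
        map_add' := by
          intro u v; funext i
          by_cases hi : i ∈ A <;> simp [hi, Matrix.mulVec_add]
        map_smul' := by
          intro c v; funext i
          by_cases hi : i ∈ A <;> simp [hi, Matrix.mulVec_smul] }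
    let wA : Fin r → ℝ := fun i => if i ∈ A then w i else 0
    refine ⟨θ.comp (LinearMap.prod RHS1 0), θ (wA, Submodule.Quotient.mk (-qvec)), ?_⟩
    intro x v hact hspan
    have hΘv : Θ v = (RHS1 x + wA, Submodule.Quotient.mk (-qvec)) := by
      refine Prod.ext ?_ ?_
      · funext i
        by_cases hi : i ∈ A
        · simp only [Θ, LinearMap.prod_apply, Pi.prod, L1, LinearMap.coe_mk, AddHom.coe_mk,
            RHS1, Pi.add_apply, wA]
          simp [hi, hact i hi]
          ring
        · simp only [Θ, LinearMap.prod_apply, Pi.prod, L1, LinearMap.coe_mk, AddHom.coe_mk,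
            RHS1, Pi.add_apply, wA]
          simp [hi]
      · show L2 v = Submodule.Quotient.mk (-qvec)
        simp only [L2, LinearMap.comp_apply, Submodule.mkQ_apply, Matrix.mulVecLin_apply]
        rw [Submodule.Quotient.eq]
        have : H *ᵥ v - -qvec = H *ᵥ v + qvec := by ring
        rw [this]
        exact hspan
    have := congrArg θ hΘv
    rw [show θ (Θ v) = v from congrFun (congrArg (fun f => f.toFun) hθ) v] at this
    rw [this]
    have hsplit : (RHS1 x + wA, (Submodule.Quotient.mk (-qvec) : Uq))
        = (RHS1 x, 0) + (wA, Submodule.Quotient.mk (-qvec)) := by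
      simp
    rw [hsplit, map_add]
    rfl
  choose ℓ b hℓb using main
  exact ⟨fun A x => ℓ A x + b A, fun A => ⟨ℓ A, b A, fun x => rfl⟩,
    fun A x v h1 h2 => hℓb A x v h1 h2⟩


section Selection

variable {E : Type*} [NormedAddCommGroup E] [NormedSpace ℝ E] {ι : Type*}

/-- a continuous selection of finitely many affine curves is Lipschitz -/
lemma selection_lipschitz (F : Finset ι) (a b : ι → E) (L : ℝ)
    (hL : ∀ j ∈ F, ‖b j‖ ≤ L) (h : ℝ → E) {s e : ℝ} (hse : s ≤ e)
    (hcont : ContinuousOn h (Icc s e))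
    (hsel : ∀ t ∈ Icc s e, ∃ j ∈ F, h t = a j + t • b j) :
    ‖h e - h s‖ ≤ L * (e - s) := by
  classical
  set X : Set ℝ := {t | ∃ j ∈ F, ∃ k ∈ F, (a j, b j) ≠ (a k, b k) ∧
    a j + t • b j = a k + t • b k} with hX
  have hXfin : X.Finite := by
    have hsub : X ⊆ ⋃ j ∈ F, ⋃ k ∈ F,
        {t : ℝ | (a j, b j) ≠ (a k, b k) ∧ a j + t • b j = a k + t • b k} := by
      intro t ht
      obtain ⟨j, hj, k, hk, hne, heq⟩ := ht
      exact Set.mem_biUnion hj (Set.mem_biUnion hk ⟨hne, heq⟩)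
    refine Set.Finite.subset ?_ hsub
    refine Set.Finite.biUnion F.finite_toSet fun j _ => ?_
    refine Set.Finite.biUnion F.finite_toSet fun k _ => ?_
    refine Set.Subsingleton.finite ?_
    intro t1 h1 t2 h2
    obtain ⟨hne1, heq1⟩ := h1
    obtain ⟨_, heq2⟩ := h2
    by_contra hne
    have hsub1 : (t1 - t2) • (b j - b k) = 0 := by
      have := sub_eq_zero.2 heq1
      have h2' := sub_eq_zero.2 heq2
      have : (a j + t1 • b j - (a k + t1 • b k)) - (a j + t2 • b j - (a k + t2 • b k)) = 0 := by
        rw [sub_eq_zero.2 heq1, sub_eq_zero.2 heq2, sub_zero]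
      calc (t1 - t2) • (b j - b k)
          = (a j + t1 • b j - (a k + t1 • b k)) - (a j + t2 • b j - (a k + t2 • b k)) := by
            simp [smul_sub, sub_smul]; abel
        _ = 0 := this
    rcases smul_eq_zero.1 hsub1 with hc | hc
    · exact hne (sub_eq_zero.1 hc)
    · have hbjk : b j = b k := sub_eq_zero.1 hc
      have haeq : a j = a k := by
        have := heq1
        rw [hbjk] at this
        exact add_right_cancel this
      exact hne1 (by rw [haeq, hbjk])
  -- strong induction on the number of crossings inside the open interval
  suffices hind : ∀ (n : ℕ) (s' e' : ℝ), s' ≤ e' → (X ∩ Ioo s' e').ncard ≤ n →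
      ContinuousOn h (Icc s' e') →
      (∀ t ∈ Icc s' e', ∃ j ∈ F, h t = a j + t • b j) →
      ‖h e' - h s'‖ ≤ L * (e' - s') by
    exact hind (X ∩ Ioo s e).ncard s e hse le_rfl hcont hsel
  intro n
  induction n with
  | zero =>
    intro s' e' hse' hcard hcont' hsel'
    rcases eq_or_lt_of_le hse' with heq | hlt
    · rw [heq]; simp
    have hempty : X ∩ Ioo s' e' = ∅ := by
      have hfin : (X ∩ Ioo s' e').Finite := hXfin.inter_of_left _
      exact (Set.ncard_eq_zero hfin).1 (Nat.le_zero.1 hcard)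
    set t₀ : ℝ := (s' + e') / 2 with ht₀def
    have ht₀ : t₀ ∈ Ioo s' e' := ⟨by simp only [ht₀def]; linarith, by simp only [ht₀def]; linarith⟩
    have ht₀I : t₀ ∈ Icc s' e' := ⟨ht₀.1.le, ht₀.2.le⟩
    obtain ⟨j₀, hj₀F, hj₀⟩ := hsel' t₀ ht₀I
    have hclosed : ∀ j : ι, IsClosed {t | t ∈ Icc s' e' ∧ h t = a j + t • b j} := by
      intro j
      have hcf : ContinuousOn (fun t : ℝ => h t - (a j + t • b j)) (Icc s' e') :=
        hcont'.sub ((continuous_const.add (continuous_id.smul continuous_const)).continuousOn)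
      have := hcf.preimage_isClosed_of_isClosed isClosed_Icc (isClosed_singleton (x := (0:E)))
      convert this using 1
      ext t
      simp only [Set.mem_inter_iff, Set.mem_preimage, Set.mem_singleton_iff, Set.mem_setOf_eq,
        sub_eq_zero]
    set u : Set ℝ := {t | t ∈ Icc s' e' ∧ h t = a j₀ + t • b j₀} with hu
    set v : Set ℝ := ⋃ j ∈ F.filter (fun j => (a j, b j) ≠ (a j₀, b j₀)),
      {t | t ∈ Icc s' e' ∧ h t = a j + t • b j} with hv
    have hu_closed : IsClosed u := hclosed j₀
    have hv_closed : IsClosed v :=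
      isClosed_biUnion_finset (fun j _ => hclosed j)
    have hcover : Ioo s' e' ⊆ u ∪ v := by
      intro t ht
      have htI : t ∈ Icc s' e' := ⟨ht.1.le, ht.2.le⟩
      obtain ⟨j, hjF, hjeq⟩ := hsel' t htI
      by_cases hpair : (a j, b j) = (a j₀, b j₀)
      · left
        have h1 : a j = a j₀ := congrArg Prod.fst hpair
        have h2 : b j = b j₀ := congrArg Prod.snd hpair
        exact ⟨htI, by rw [hjeq, h1, h2]⟩
      · right
        exact Set.mem_biUnion (Finset.mem_filter.2 ⟨hjF, hpair⟩) ⟨htI, hjeq⟩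
    have hIoo_u : Ioo s' e' ⊆ u := by
      intro t ht
      rcases hcover ht with hmem | hmem
      · exact hmem
      · exfalso
        have hune : (Ioo s' e' ∩ u).Nonempty := ⟨t₀, ht₀, ht₀I, hj₀⟩
        have hvne : (Ioo s' e' ∩ v).Nonempty := ⟨t, ht, hmem⟩
        obtain ⟨tc, htcI, htcu, htcv⟩ :=
          isPreconnected_closed_iff.1 isPreconnected_Ioo u v hu_closed hv_closed hcover
            hune hvne
        obtain ⟨j, hjmem, htcj⟩ := Set.mem_iUnion₂.1 htcv
        obtain ⟨hjF, hjne⟩ := Finset.mem_filter.1 hjmem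
        have hcross : tc ∈ X := by
          refine ⟨j, hjF, j₀, hj₀F, hjne, ?_⟩
          rw [← htcj.2, ← htcu.2]
        have : tc ∈ X ∩ Ioo s' e' := ⟨hcross, htcI⟩
        rw [hempty] at this
        exact this
    have hIcc_u : Icc s' e' ⊆ u := by
      rw [← closure_Ioo (ne_of_lt hlt)]
      exact closure_minimal hIoo_u hu_closed
    have hs'u : h s' = a j₀ + s' • b j₀ := (hIcc_u ⟨le_rfl, hse'⟩).2
    have he'u : h e' = a j₀ + e' • b j₀ := (hIcc_u ⟨hse', le_rfl⟩).2
    rw [hs'u, he'u]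
    have hdiff : (a j₀ + e' • b j₀) - (a j₀ + s' • b j₀) = (e' - s') • b j₀ := by
      rw [sub_smul]; abel
    rw [hdiff, norm_smul, Real.norm_eq_abs, abs_of_nonneg (by linarith : (0:ℝ) ≤ e' - s')]
    exact mul_le_mul_of_nonneg_right (hL j₀ hj₀F) (by linarith : (0:ℝ) ≤ e' - s') |>.trans_eq (mul_comm L (e' - s')) |>.trans_eq rfl |> (fun hh => by
      calc (e' - s') * ‖b j₀‖ = ‖b j₀‖ * (e' - s') := mul_comm _ _
        _ ≤ L * (e' - s') := mul_le_mul_of_nonneg_right (hL j₀ hj₀F) (by linarith))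
  | succ n ih =>
    intro s' e' hse' hcard hcont' hsel'
    by_cases hc : (X ∩ Ioo s' e').ncard ≤ n
    · exact ih s' e' hse' hc hcont' hsel'
    · push_neg at hc
      have hfin : (X ∩ Ioo s' e').Finite := hXfin.inter_of_left _
      have hne : (X ∩ Ioo s' e').Nonempty := by
        rw [← Set.ncard_pos hfin]; omega
      obtain ⟨tm, htmX, htmI⟩ := hne
      have htm_mem : tm ∈ X ∩ Ioo s' e' := ⟨htmX, htmI⟩
      have hsub1 : X ∩ Ioo s' tm ⊆ (X ∩ Ioo s' e') \ {tm} := by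
        rintro t ⟨ht1, ht2⟩
        exact ⟨⟨ht1, ht2.1, ht2.2.trans htmI.2⟩, by
          simp only [Set.mem_singleton_iff]; exact ne_of_lt ht2.2⟩
      have hsub2 : X ∩ Ioo tm e' ⊆ (X ∩ Ioo s' e') \ {tm} := by
        rintro t ⟨ht1, ht2⟩
        exact ⟨⟨ht1, htmI.1.trans ht2.1, ht2.2⟩, by
          simp only [Set.mem_singleton_iff]; exact (ne_of_gt ht2.1)⟩
      have hcard1 : (X ∩ Ioo s' tm).ncard ≤ n := by
        have h1 : ((X ∩ Ioo s' e') \ {tm}).ncard = (X ∩ Ioo s' e').ncard - 1 := by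
          rw [Set.ncard_diff_singleton_of_mem htm_mem]
        have h2 := Set.ncard_le_ncard hsub1 hfin.diff
        omega
      have hcard2 : (X ∩ Ioo tm e').ncard ≤ n := by
        have h1 : ((X ∩ Ioo s' e') \ {tm}).ncard = (X ∩ Ioo s' e').ncard - 1 := by
          rw [Set.ncard_diff_singleton_of_mem htm_mem]
        have h2 := Set.ncard_le_ncard hsub2 hfin.diff
        omega
      have hsm : s' ≤ tm := htmI.1.le
      have hme : tm ≤ e' := htmI.2.le
      have hicc1 : Icc s' tm ⊆ Icc s' e' := Set.Icc_subset_Icc le_rfl hme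
      have hicc2 : Icc tm e' ⊆ Icc s' e' := Set.Icc_subset_Icc hsm le_rfl
      have hA := ih s' tm hsm hcard1 (hcont'.mono hicc1) (fun t ht => hsel' t (hicc1 ht))
      have hB := ih tm e' hme hcard2 (hcont'.mono hicc2) (fun t ht => hsel' t (hicc2 ht))
      calc ‖h e' - h s'‖ = ‖(h e' - h tm) + (h tm - h s')‖ := by
            congr 1; abel
        _ ≤ ‖h e' - h tm‖ + ‖h tm - h s'‖ := norm_add_le _ _
        _ ≤ L * (e' - tm) + L * (tm - s') := add_le_add hB hA
        _ = L * (e' - s') := by ring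

end Selection


lemma interp_K {s : ℝ} (hs0 : 0 ≤ s) (hs1 : s ≤ 1) {x1 x2 : Fin q → ℝ}
    {u1 u2 : Fin d → ℝ} (h1 : u1 ∈ K G w S x1) (h2 : u2 ∈ K G w S x2) :
    (1-s) • u1 + s • u2 ∈ K G w S ((1-s) • x1 + s • x2) := by
  intro i
  have e1 : (G *ᵥ ((1-s) • u1 + s • u2)) i = (1-s) * (G *ᵥ u1) i + s * (G *ᵥ u2) i := by
    rw [Matrix.mulVec_add, Matrix.mulVec_smul, Matrix.mulVec_smul]
    simp [smul_eq_mul]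
  have e2 : (S *ᵥ ((1-s) • x1 + s • x2)) i = (1-s) * (S *ᵥ x1) i + s * (S *ᵥ x2) i := by
    rw [Matrix.mulVec_add, Matrix.mulVec_smul, Matrix.mulVec_smul]
    simp [smul_eq_mul]
  rw [e1, e2]
  have f1 := h1 i
  have f2 := h2 i
  nlinarith

set_option maxHeartbeats 2000000 in
/-- continuity of the solution map along a segment -/
lemma vstar_seg_cont (hHsymm : H.IsSymm) (hHpd : H.PosDef) {D : Set (Fin q → ℝ)}
    (hfeas : ∀ x ∈ D, (K G w S x).Nonempty)
    (vs : (Fin q → ℝ) → (Fin d → ℝ))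
    (hvs : ∀ x ∈ D, vs x ∈ K G w S x ∧ ∀ u ∈ K G w S x, qf H qvec (vs x) ≤ qf H qvec u)
    (aff : Finset (Fin r) → (Fin q → ℝ) → (Fin d → ℝ))
    (haff : ∀ A, ∃ (ℓ : (Fin q → ℝ) →ₗ[ℝ] (Fin d → ℝ)) (b : Fin d → ℝ), ∀ z, aff A z = ℓ z + b)
    (hsel : ∀ z ∈ D, ∃ A, vs z = aff A z)
    {x y : Fin q → ℝ} (hseg : ∀ t ∈ Icc (0:ℝ) 1, x + t • (y - x) ∈ D) :
    ContinuousOn (fun t => vs (x + t • (y - x))) (Icc (0:ℝ) 1) := by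
  classical
  set γ : ℝ → (Fin q → ℝ) := fun t => x + t • (y - x) with hγ
  have hγcont : Continuous γ := continuous_const.add (continuous_id.smul continuous_const)
  choose ℓ bb haffeq using haff
  -- uniform bound for the solution along the segment
  set CL : Finset (Fin r) → ((Fin q → ℝ) →L[ℝ] (Fin d → ℝ)) :=
    fun A => LinearMap.toContinuousLinearMap (ℓ A) with hCL
  set Lsum : ℝ := ∑ A : Finset (Fin r), ‖CL A‖ with hLsum
  set Bsum : ℝ := ∑ A : Finset (Fin r), ‖bb A‖ with hBsum
  have hLA : ∀ A, ‖CL A‖ ≤ Lsum :=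
    fun A => Finset.single_le_sum (f := fun A => ‖CL A‖) (fun _ _ => norm_nonneg _)
      (Finset.mem_univ A)
  have hBA : ∀ A, ‖bb A‖ ≤ Bsum :=
    fun A => Finset.single_le_sum (f := fun A => ‖bb A‖) (fun _ _ => norm_nonneg _)
      (Finset.mem_univ A)
  have hLnonneg : 0 ≤ Lsum := Finset.sum_nonneg fun _ _ => norm_nonneg _
  set Rγ : ℝ := ‖x‖ + ‖y - x‖ with hRγ
  have hγbd : ∀ t ∈ Icc (0:ℝ) 1, ‖γ t‖ ≤ Rγ := by
    intro t ht
    refine (norm_add_le _ _).trans ?_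
    have : ‖t • (y - x)‖ = |t| * ‖y - x‖ := by rw [norm_smul, Real.norm_eq_abs]
    rw [this]
    have h1 : |t| ≤ 1 := abs_le.2 ⟨by linarith [ht.1], ht.2⟩
    nlinarith [norm_nonneg (y - x)]
  set R : ℝ := Lsum * Rγ + Bsum with hR
  have hvbd : ∀ t ∈ Icc (0:ℝ) 1, ‖vs (γ t)‖ ≤ R := by
    intro t ht
    obtain ⟨A, hA⟩ := hsel _ (hseg t ht)
    rw [hA, haffeq A]
    refine (norm_add_le _ _).trans ?_
    have h1 : ‖ℓ A (γ t)‖ ≤ ‖CL A‖ * ‖γ t‖ := (CL A).le_opNorm (γ t)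
    have h2 : ‖CL A‖ * ‖γ t‖ ≤ Lsum * Rγ := by
      have := hγbd t ht
      have h3 := hLA A
      nlinarith [norm_nonneg (γ t), norm_nonneg (CL A)]
    have h4 := hBA A
    linarith
  -- now continuity at each point
  intro t₀ ht₀
  have hD₀ : γ t₀ ∈ D := hseg t₀ ht₀
  rw [ContinuousWithinAt]
  rw [Filter.tendsto_iff_seq_tendsto]
  intro tn htn
  obtain ⟨htn_lim, htn_mem⟩ := tendsto_nhdsWithin_iff.1 htn
  set τ : ℕ → ℝ := fun n => if tn n ∈ Icc (0:ℝ) 1 then tn n else t₀ with hτ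
  have hτ_mem : ∀ n, τ n ∈ Icc (0:ℝ) 1 := by
    intro n
    simp only [hτ]
    split_ifs with hc
    · exact hc
    · exact ht₀
  have hev : ∀ᶠ n in Filter.atTop, τ n = tn n := htn_mem.mono fun n hn => by
    simp only [hτ]; rw [if_pos hn]
  have hτ_lim : Filter.Tendsto τ Filter.atTop (nhds t₀) := htn_lim.congr' (hev.mono fun n hn => hn.symm)
  suffices hmain : Filter.Tendsto (fun n => vs (γ (τ n))) Filter.atTop (nhds (vs (γ t₀))) by
    exact hmain.congr' (hev.mono fun n hn => congrArg (fun z => vs (γ z)) hn)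
  apply Filter.tendsto_of_subseq_tendsto
  intro ns hns
  set σ : ℕ → ℝ := fun k => τ (ns k) with hσ
  have hσ_mem : ∀ k, σ k ∈ Icc (0:ℝ) 1 := fun k => hτ_mem (ns k)
  have hσ_lim : Filter.Tendsto σ Filter.atTop (nhds t₀) := hτ_lim.comp hns
  set vn : ℕ → (Fin d → ℝ) := fun k => vs (γ (σ k)) with hvn
  have hvnball : ∀ k, vn k ∈ Metric.closedBall (0 : Fin d → ℝ) R := by
    intro k
    rw [Metric.mem_closedBall, dist_zero_right]
    exact hvbd _ (hσ_mem k)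
  obtain ⟨a, _, φ, hφ, hconv⟩ :=
    tendsto_subseq_of_bounded Metric.isBounded_closedBall hvnball
  have hσφ_lim : Filter.Tendsto (fun k => σ (φ k)) Filter.atTop (nhds t₀) :=
    hσ_lim.comp hφ.tendsto_atTop
  -- a is feasible for γ t₀
  have hafeas : a ∈ K G w S (γ t₀) := by
    intro i
    have hGi : Continuous (fun v : Fin d → ℝ => (G *ᵥ v) i) :=
      (continuous_apply i).comp (continuous_const.matrix_mulVec continuous_id)
    have hlhs : Filter.Tendsto (fun k => (G *ᵥ (vn (φ k))) i) Filter.atTop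
        (nhds ((G *ᵥ a) i)) := (hGi.tendsto a).comp hconv
    have hSi : Continuous (fun z : Fin q → ℝ => w i + (S *ᵥ z) i) :=
      continuous_const.add ((continuous_apply i).comp
        (continuous_const.matrix_mulVec continuous_id))
    have hrhs : Filter.Tendsto (fun k => w i + (S *ᵥ (γ (σ (φ k)))) i) Filter.atTop
        (nhds (w i + (S *ᵥ (γ t₀)) i)) := ((hSi.comp hγcont).tendsto t₀).comp hσφ_lim
    refine le_of_tendsto_of_tendsto' hlhs hrhs fun k => ?_
    exact (hvs _ (hseg _ (hσ_mem (φ k)))).1 i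
  -- a is optimal for γ t₀
  have haopt : ∀ u ∈ K G w S (γ t₀), qf H qvec a ≤ qf H qvec u := by
    intro u hu
    obtain ⟨u0, hu0⟩ := hfeas _ (hseg 0 ⟨le_rfl, zero_le_one⟩)
    obtain ⟨u1, hu1⟩ := hfeas _ (hseg 1 ⟨zero_le_one, le_rfl⟩)
    -- interpolated feasible approximations of u
    set sk : ℕ → ℝ := fun k => if t₀ ≤ σ (φ k) then
        (if (1:ℝ) - t₀ = 0 then 0 else (σ (φ k) - t₀) / (1 - t₀))
      else (t₀ - σ (φ k)) / t₀ with hsk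
    set pk : ℕ → (Fin d → ℝ) := fun k => if t₀ ≤ σ (φ k) then u1 else u0 with hpk
    set ek : ℕ → ℝ := fun k => if t₀ ≤ σ (φ k) then 1 else 0 with hek
    have ht₀0 : (0:ℝ) ≤ t₀ := ht₀.1
    have ht₀1 : t₀ ≤ 1 := ht₀.2
    have hsk_props : ∀ k, 0 ≤ sk k ∧ sk k ≤ 1 ∧ (1 - sk k) * t₀ + sk k * ek k = σ (φ k) := by
      intro k
      have hσk := hσ_mem (φ k)
      by_cases hc : t₀ ≤ σ (φ k)
      · by_cases hc1 : (1:ℝ) - t₀ = 0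
        · have ht1 : t₀ = 1 := by linarith
          have : σ (φ k) = t₀ := le_antisymm (by rw [ht1]; exact hσk.2) hc
          simp [hsk, hek, hc, hc1, this]
        · have hlt : 0 < 1 - t₀ := lt_of_le_of_ne (by linarith) (Ne.symm hc1)
          refine ⟨?_, ?_, ?_⟩
          · simp only [hsk, hc, if_true, hc1, if_false]
            exact div_nonneg (by linarith) hlt.le
          · simp only [hsk, hc, if_true, hc1, if_false]
            rw [div_le_one hlt]
            linarith [hσk.2]
          · simp only [hsk, hek, hc, if_true, hc1, if_false]
            field_simp
            try ring
      · push_neg at hc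
        have ht₀pos : 0 < t₀ := lt_of_le_of_lt (hσk.1) hc
        refine ⟨?_, ?_, ?_⟩
        · simp only [hsk, hc.not_ge, if_false]
          exact div_nonneg (by linarith) ht₀pos.le
        · simp only [hsk, hc.not_ge, if_false]
          rw [div_le_one ht₀pos]
          linarith [hσk.1]
        · simp only [hsk, hek, hc.not_ge, if_false]
          field_simp
          ring
    have hpk_mem : ∀ k, pk k ∈ K G w S (γ (ek k)) := by
      intro k
      by_cases hc : t₀ ≤ σ (φ k) <;> simp only [hpk, hek, hc, if_true, if_false] <;>
        [exact hu1; exact hu0]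
    have hγcomb : ∀ (s t e : ℝ), (1 - s) • γ t + s • γ e = γ ((1-s)*t + s*e) := by
      intro s t e
      funext j
      simp only [hγ, Pi.add_apply, Pi.smul_apply, Pi.sub_apply, smul_eq_mul]
      ring
    set uk : ℕ → (Fin d → ℝ) := fun k => (1 - sk k) • u + sk k • pk k with huk
    have huk_mem : ∀ k, uk k ∈ K G w S (γ (σ (φ k))) := by
      intro k
      obtain ⟨h0, h1', h2'⟩ := hsk_props k
      have := interp_K h0 h1' hu (hpk_mem k)
      rw [hγcomb] at this
      rwa [h2'] at this
    -- uk tends to u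
    have hsk_lim : Filter.Tendsto sk Filter.atTop (nhds 0) := by
      set c : ℝ := max (if (1:ℝ) - t₀ = 0 then 0 else 1/(1-t₀)) (if t₀ = 0 then 0 else 1/t₀)
        with hcdef
      have hb1 : (0:ℝ) ≤ if (1:ℝ) - t₀ = 0 then 0 else 1/(1-t₀) := by
        split_ifs with hh
        · exact le_rfl
        · have : 0 < 1 - t₀ := lt_of_le_of_ne (by linarith) (Ne.symm hh)
          positivity
      have hb2 : (0:ℝ) ≤ if t₀ = 0 then 0 else 1/t₀ := by
        split_ifs with hh
        · exact le_rfl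
        · have : 0 < t₀ := lt_of_le_of_ne ht₀0 (Ne.symm hh)
          positivity
      have hc_nonneg : 0 ≤ c := le_trans hb1 (le_max_left _ _)
      have hskb : ∀ k, sk k ≤ c * |σ (φ k) - t₀| := by
        intro k
        have hσk := hσ_mem (φ k)
        by_cases hc2 : t₀ ≤ σ (φ k)
        · by_cases hc1 : (1:ℝ) - t₀ = 0
          · have h1 : sk k = 0 := by simp [hsk, hc2, hc1]
            rw [h1]
            positivity
          · have hlt : 0 < 1 - t₀ := lt_of_le_of_ne (by linarith) (Ne.symm hc1)
            have h1 : sk k = (σ (φ k) - t₀) / (1 - t₀) := by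
              simp only [hsk, hc2, if_true, hc1, if_false]
            rw [h1]
            have habs : σ (φ k) - t₀ ≤ |σ (φ k) - t₀| := le_abs_self _
            have hcle : 1/(1-t₀) ≤ c := le_trans (by rw [if_neg hc1]) (le_max_left _ _)
            calc (σ (φ k) - t₀) / (1 - t₀) = (σ (φ k) - t₀) * (1/(1-t₀)) := by
                  field_simp
              _ ≤ |σ (φ k) - t₀| * (1/(1-t₀)) :=
                  mul_le_mul_of_nonneg_right habs (by positivity)
              _ ≤ |σ (φ k) - t₀| * c :=
                  mul_le_mul_of_nonneg_left hcle (abs_nonneg _)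
              _ = c * |σ (φ k) - t₀| := mul_comm _ _
        · push_neg at hc2
          have ht₀pos : 0 < t₀ := lt_of_le_of_lt (hσk.1) hc2
          have h1 : sk k = (t₀ - σ (φ k)) / t₀ := by
            simp only [hsk, hc2.not_ge, if_false]
          rw [h1]
          have habs : t₀ - σ (φ k) ≤ |σ (φ k) - t₀| := by
            rw [abs_sub_comm]; exact le_abs_self _
          have hcle : 1/t₀ ≤ c := le_trans (by rw [if_neg (ne_of_gt ht₀pos)]) (le_max_right _ _)
          calc (t₀ - σ (φ k)) / t₀ = (t₀ - σ (φ k)) * (1/t₀) := by field_simp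
            _ ≤ |σ (φ k) - t₀| * (1/t₀) :=
                mul_le_mul_of_nonneg_right habs (by positivity)
            _ ≤ |σ (φ k) - t₀| * c := mul_le_mul_of_nonneg_left hcle (abs_nonneg _)
            _ = c * |σ (φ k) - t₀| := mul_comm _ _
      have hlim : Filter.Tendsto (fun k => c * |σ (φ k) - t₀|) Filter.atTop (nhds 0) := by
        have h1 : Filter.Tendsto (fun k => σ (φ k) - t₀) Filter.atTop (nhds 0) := by
          have := hσφ_lim.sub_const t₀
          simpa using this
        have h2 := h1.abs
        simp only [abs_zero] at h2
        have := h2.const_mul c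
        simpa using this
      exact squeeze_zero (fun k => (hsk_props k).1) hskb hlim
    have huk_lim : Filter.Tendsto uk Filter.atTop (nhds u) := by
      rw [← tendsto_sub_nhds_zero_iff]
      rw [tendsto_zero_iff_norm_tendsto_zero]
      have hbound : ∀ k, ‖uk k - u‖ ≤ sk k * (‖u1 - u‖ + ‖u0 - u‖) := by
        intro k
        have : uk k - u = sk k • (pk k - u) := by
          simp only [huk]
          rw [sub_smul, one_smul, smul_sub]
          abel
        rw [this, norm_smul, Real.norm_eq_abs, abs_of_nonneg (hsk_props k).1]
        have hpkb : ‖pk k - u‖ ≤ ‖u1 - u‖ + ‖u0 - u‖ := by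
          by_cases hc : t₀ ≤ σ (φ k) <;> simp only [hpk, hc, if_true, if_false]
          · linarith [norm_nonneg (u0 - u)]
          · linarith [norm_nonneg (u1 - u)]
        exact mul_le_mul_of_nonneg_left hpkb (hsk_props k).1
      refine squeeze_zero (fun k => norm_nonneg _) hbound ?_
      have : Filter.Tendsto (fun k => sk k * (‖u1 - u‖ + ‖u0 - u‖)) Filter.atTop
          (nhds (0 * (‖u1 - u‖ + ‖u0 - u‖))) := hsk_lim.mul_const _
      simpa using this
    -- pass the optimality inequality to the limit
    have hval : ∀ k, qf H qvec (vn (φ k)) ≤ qf H qvec (uk k) := by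
      intro k
      exact (hvs _ (hseg _ (hσ_mem (φ k)))).2 _ (huk_mem k)
    have hql : Filter.Tendsto (fun k => qf H qvec (vn (φ k))) Filter.atTop
        (nhds (qf H qvec a)) := (qf_cont.tendsto a).comp hconv
    have hqr : Filter.Tendsto (fun k => qf H qvec (uk k)) Filter.atTop
        (nhds (qf H qvec u)) := (qf_cont.tendsto u).comp huk_lim
    exact le_of_tendsto_of_tendsto' hql hqr hval
  -- identify the limit
  have haeq : a = vs (γ t₀) := by
    obtain ⟨hm1, hm2⟩ := hvs _ hD₀
    exact min_unique hHsymm hHpd (K_convex (γ t₀)) hafeas hm1 haopt hm2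
  exact ⟨φ, by rw [← haeq] at *; exact hconv⟩

end Stmt17Aux

open Stmt17Aux in
set_option maxHeartbeats 1000000 in
/-- the solution map of a strongly convex multiparametric QP is
single-valued and Lipschitz on convex subsets of the parameter domain. -/
theorem stmt17 {d q r : ℕ}
    (H : Matrix (Fin d) (Fin d) ℝ) (qvec : Fin d → ℝ)
    (G : Matrix (Fin r) (Fin d) ℝ) (w : Fin r → ℝ) (S : Matrix (Fin r) (Fin q) ℝ)
    (hHsymm : H.IsSymm) (hHpd : H.PosDef)
    (D : Set (Fin q → ℝ))
    (hfeas : ∀ x ∈ D, {v : Fin d → ℝ | ∀ i, (G.mulVec v) i ≤ w i + (S.mulVec x) i}.Nonempty) :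
    ∃ vstar : (Fin q → ℝ) → (Fin d → ℝ),
      (∀ x ∈ D,
        (∀ i, (G.mulVec (vstar x)) i ≤ w i + (S.mulVec x) i) ∧
        (∀ v : Fin d → ℝ, (∀ i, (G.mulVec v) i ≤ w i + (S.mulVec x) i) →
          (1 / 2) * dotProduct (vstar x) (H.mulVec (vstar x))
              + dotProduct qvec (vstar x)
            ≤ (1 / 2) * dotProduct v (H.mulVec v) + dotProduct qvec v) ∧
        (∀ v : Fin d → ℝ, (∀ i, (G.mulVec v) i ≤ w i + (S.mulVec x) i) →
          (∀ u : Fin d → ℝ, (∀ i, (G.mulVec u) i ≤ w i + (S.mulVec x) i) →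
            (1 / 2) * dotProduct v (H.mulVec v) + dotProduct qvec v
              ≤ (1 / 2) * dotProduct u (H.mulVec u) + dotProduct qvec u) →
          v = vstar x)) ∧
      (∀ Cset : Set (Fin q → ℝ), Convex ℝ Cset → Cset ⊆ D →
        ∃ Lc : NNReal, LipschitzOnWith Lc vstar Cset) := by
  classical
  have hfeas' : ∀ x ∈ D, (K G w S x).Nonempty := hfeas
  have hex : ∀ x ∈ D, ∃ v, v ∈ K G w S x ∧ ∀ u ∈ K G w S x,
      qf H qvec v ≤ qf H qvec u := by
    intro x hx
    obtain ⟨v, hv, hmin⟩ := exists_min (qvec := qvec) hHsymm hHpd (hfeas' x hx) (K_closed x)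
    exact ⟨v, hv, hmin⟩
  set vs : (Fin q → ℝ) → (Fin d → ℝ) := fun x =>
    if hx : ∃ v, v ∈ K G w S x ∧ ∀ u ∈ K G w S x, qf H qvec v ≤ qf H qvec u
    then hx.choose else 0 with hvsdef
  have hvs : ∀ x ∈ D, vs x ∈ K G w S x ∧ ∀ u ∈ K G w S x,
      qf H qvec (vs x) ≤ qf H qvec u := by
    intro x hx
    have he := hex x hx
    have : vs x = he.choose := by rw [hvsdef]; exact dif_pos he
    rw [this]
    exact he.choose_spec
  refine ⟨vs, ?_, ?_⟩
  · intro x hx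
    obtain ⟨hfx, hopt⟩ := hvs x hx
    refine ⟨hfx, ?_, ?_⟩
    · intro v hv
      exact hopt v hv
    · intro v hv hvmin
      exact min_unique hHsymm hHpd (K_convex x) hv hfx (fun z hz => hvmin z hz) hopt
  · intro Cset hCcv hCD
    obtain ⟨aff, haff, hchar⟩ :=
      exists_affine_family (H := H) (qvec := qvec) (G := G) (w := w) (S := S) hHpd
    have hsel : ∀ z ∈ D, ∃ A, vs z = aff A z := by
      intro z hz
      obtain ⟨hf, hopt⟩ := hvs z hz
      set A : Finset (Fin r) :=
        Finset.univ.filter (fun i => (G *ᵥ vs z) i = w i + (S *ᵥ z) i) with hAdef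
      have hAiff : ∀ i, i ∈ A ↔ (G *ᵥ vs z) i = w i + (S *ᵥ z) i := by
        intro i; simp [hAdef]
      have hspan := span_kkt hHsymm hHpd hf hopt A hAiff
      exact ⟨A, hchar A z (vs z) (fun i hi => (hAiff i).1 hi) hspan⟩
    choose ℓ bb haffeq using haff
    set CL : Finset (Fin r) → ((Fin q → ℝ) →L[ℝ] (Fin d → ℝ)) :=
      fun A => LinearMap.toContinuousLinearMap (ℓ A) with hCLdef
    set L : ℝ := ∑ A : Finset (Fin r), ‖CL A‖ with hLdef
    have hLA : ∀ A, ‖CL A‖ ≤ L :=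
      fun A => Finset.single_le_sum (f := fun A => ‖CL A‖) (fun _ _ => norm_nonneg _)
        (Finset.mem_univ A)
    have hL0 : 0 ≤ L := Finset.sum_nonneg fun _ _ => norm_nonneg _
    refine ⟨L.toNNReal, ?_⟩
    apply LipschitzOnWith.of_dist_le_mul
    intro x hx y hy
    have hseg : ∀ t ∈ Icc (0:ℝ) 1, x + t • (y - x) ∈ D := by
      intro t ht
      have hrw : x + t • (y - x) = (1 - t) • x + t • y := by
        funext j
        simp only [Pi.add_apply, Pi.smul_apply, Pi.sub_apply, smul_eq_mul]
        ring
      rw [hrw]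
      exact hCD (hCcv hx hy (by linarith [ht.2]) ht.1 (by ring))
    have hcont := vstar_seg_cont hHsymm hHpd hfeas' vs hvs aff
      (fun A => ⟨ℓ A, bb A, haffeq A⟩) hsel hseg
    have hLb : ∀ A ∈ (Finset.univ : Finset (Finset (Fin r))),
        ‖ℓ A (y - x)‖ ≤ L * ‖y - x‖ := by
      intro A _
      calc ‖ℓ A (y - x)‖ = ‖CL A (y - x)‖ := rfl
        _ ≤ ‖CL A‖ * ‖y - x‖ := (CL A).le_opNorm _
        _ ≤ L * ‖y - x‖ := mul_le_mul_of_nonneg_right (hLA A) (norm_nonneg _)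
    have hsel' : ∀ t ∈ Icc (0:ℝ) 1, ∃ A ∈ (Finset.univ : Finset (Finset (Fin r))),
        (fun t => vs (x + t • (y - x))) t = (ℓ A x + bb A) + t • (ℓ A (y - x)) := by
      intro t ht
      obtain ⟨A, hA⟩ := hsel _ (hseg t ht)
      refine ⟨A, Finset.mem_univ _, ?_⟩
      simp only
      rw [hA, haffeq A, map_add, _root_.map_smul]
      abel
    have hkey := selection_lipschitz (Finset.univ : Finset (Finset (Fin r)))
      (fun A => ℓ A x + bb A) (fun A => ℓ A (y - x)) (L * ‖y - x‖) hLb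
      (fun t => vs (x + t • (y - x))) zero_le_one hcont hsel'
    have h1 : x + (1:ℝ) • (y - x) = y := by
      funext j
      simp only [Pi.add_apply, Pi.smul_apply, Pi.sub_apply, smul_eq_mul]
      ring
    have h0 : x + (0:ℝ) • (y - x) = x := by
      funext j
      simp only [Pi.add_apply, Pi.smul_apply, Pi.sub_apply, smul_eq_mul]
      ring
    simp only [h1, h0] at hkey
    rw [sub_zero] at hkey
    have hdist : dist (vs x) (vs y) ≤ L * ‖y - x‖ := by
      rw [dist_eq_norm, norm_sub_rev]
      calc ‖vs y - vs x‖ ≤ L * ‖y - x‖ * 1 := hkey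
        _ = L * ‖y - x‖ := mul_one _
    have hxy : ‖y - x‖ = dist x y := by rw [dist_eq_norm, norm_sub_rev]
    rw [hxy] at hdist
    refine hdist.trans ?_
    exact mul_le_mul_of_nonneg_right (Real.le_coe_toNNReal L) dist_nonneg
end
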